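/- For integers n, m with 0 ≤ m and 2(m+1) < n, we have ∑_{k=0}^{m} binom(n,k) ≤ ((m+1)/(n-2m-2))·binom(n, m+1). -/

import Mathlib

/-- For `0 ≤ m` and `2(m+1) < n`,
`∑_{k=0}^{m} binom(n,k) ≤ ((m+1)/(n-2m-2))·binom(n, m+1)`. -/
theorem stmt1 (n m : ℕ) (h : 2 * (m + 1) < n) :
    (∑ k ∈ Finset.range (m + 1), (n.choose k : ℚ)) ≤
      ((m + 1 : ℚ) / ((n : ℚ) - 2 * m - 2)) * (n.choose (m + 1)) := by
  induction m with
  | zero =>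
      norm_num [Finset.sum_range_one]
      have hn : (3 : ℚ) ≤ n := by exact_mod_cast h
      rw [inv_mul_eq_div, le_div_iff₀ (by linarith)]
      linarith
  | succ m ih =>
      have ih' := ih (by omega)
      rw [Finset.sum_range_succ]
      have hkey : ((m : ℚ) + 2) * (n.choose (m + 2)) = ((n : ℚ) - m - 1) * (n.choose (m + 1)) := by
        have := Nat.choose_succ_right_eq n (m + 1)
        have hle : m + 1 ≤ n := by omega
        have : ((n.choose (m + 2) : ℚ)) * (m + 2) = (n.choose (m + 1)) * ((n : ℚ) - (m + 1)) := by
          rw [show ((n:ℚ) - (m+1)) = ((n - (m+1) : ℕ) : ℚ) by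
            push_cast [Nat.cast_sub hle]; ring]
          exact_mod_cast this
        linarith [this]
      have hc1 : (0 : ℚ) ≤ (n.choose (m + 1) : ℚ) := by positivity
      have hd1 : (0 : ℚ) < (n : ℚ) - 2 * m - 2 := by
        have : (2 * m + 5 : ℚ) ≤ n := by exact_mod_cast h
        linarith
      have hd2 : (0 : ℚ) < (n : ℚ) - 2 * (m + 1) - 2 := by
        have : (2 * m + 5 : ℚ) ≤ n := by exact_mod_cast h
        linarith
      have hgoal : ((m : ℚ) + 1) / ((n : ℚ) - 2 * m - 2) * (n.choose (m + 1))
          + (n.choose (m + 1)) ≤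
          ((m : ℚ) + 1 + 1) / ((n : ℚ) - 2 * (m + 1) - 2) * (n.choose (m + 2)) := by
        rw [div_mul_eq_mul_div, div_mul_eq_mul_div, div_add' _ _ _ (ne_of_gt hd1),
          div_le_div_iff₀ hd1 hd2]
        nlinarith [hkey, hc1, hd1, hd2]
      push_cast at ih' hgoal ⊢
      linarith
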